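/- arXiv:1606.07592 — 2 statements merged into one kernel-verified Lean document; each statement's English description precedes it below -/
import Mathlib

section
/- Let S be epsilon-strongly graded by a group G with R = S_e and identity elements ε_g of S_g S_{g⁻¹}. Then S is strongly graded by G (i.e. S_g S_h = S_{gh} for all g,h) if and only if ε_g = 1 for every g ∈ G. -/
open Pointwise

variable {S : Type*} [Ring S] {ι : Type*} [AddGroup ι]

/-- `I` is a unital ideal of the principal component `𝒜 0`. -/
def IsUnitalIdealOfZero (𝒜 : ι → AddSubgroup S) (I : AddSubgroup S) : Prop :=
  I ≤ 𝒜 0 ∧ (∀ r ∈ 𝒜 0, ∀ x ∈ I, r * x ∈ I ∧ x * r ∈ I) ∧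
    ∃ e ∈ I, ∀ x ∈ I, e * x = x ∧ x * e = x

/-- `S` is epsilon-strongly graded by the (additively written) group `ι`:
for each `g`, `𝒜 g * 𝒜 (-g)` is a unital ideal of `𝒜 0` and
`𝒜 g * 𝒜 h = (𝒜 g * 𝒜 (-g)) * 𝒜 (g+h) = 𝒜 (g+h) * (𝒜 (-h) * 𝒜 h)`. -/
def IsEpsilonStronglyGraded (𝒜 : ι → AddSubgroup S) : Prop :=
  (∀ g : ι, IsUnitalIdealOfZero 𝒜 (𝒜 g * 𝒜 (-g))) ∧
    ∀ g h : ι, 𝒜 g * 𝒜 h = (𝒜 g * 𝒜 (-g)) * 𝒜 (g + h) ∧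
      𝒜 g * 𝒜 h = 𝒜 (g + h) * (𝒜 (-h) * 𝒜 h)

private lemma addSubgroup_mul_mem_mul {M N : AddSubgroup S} {m n : S}
    (hm : m ∈ M) (hn : n ∈ N) : m * n ∈ M * N :=
  AddSubmonoid.mul_mem_mul hm hn

private lemma addSubgroup_mul_le {M N K : AddSubgroup S} :
    M * N ≤ K ↔ ∀ m ∈ M, ∀ n ∈ N, m * n ∈ K := by
  constructor
  · intro hle m hm n hn; exact hle (addSubgroup_mul_mem_mul hm hn)
  · intro H x hx
    exact AddSubmonoid.mul_le.2 H (by exact hx : x ∈ M.toAddSubmonoid * N.toAddSubmonoid)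

/-- An epsilon-strongly graded ring is strongly graded iff `ε g = 1` for every `g`. -/
theorem stronglyGraded_iff_epsilon_eq_one [DecidableEq ι]
    (𝒜 : ι → AddSubgroup S) [GradedRing 𝒜]
    (h : IsEpsilonStronglyGraded 𝒜) (ε : ι → S)
    (hmem : ∀ g : ι, ε g ∈ 𝒜 g * 𝒜 (-g))
    (hid : ∀ g : ι, ∀ x ∈ 𝒜 g * 𝒜 (-g), ε g * x = x ∧ x * ε g = x) :
    (∀ g h : ι, 𝒜 g * 𝒜 h = 𝒜 (g + h)) ↔ ∀ g : ι, ε g = 1 := by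
  constructor
  · intro hs g
    have h1 : (1 : S) ∈ 𝒜 g * 𝒜 (-g) := by
      rw [hs g (-g)]
      simpa using SetLike.one_mem_graded 𝒜
    simpa using (hid g 1 h1).1
  · intro he g k
    apply le_antisymm
    · calc 𝒜 g * 𝒜 k = (𝒜 g * 𝒜 (-g)) * 𝒜 (g + k) := (h.2 g k).1
        _ ≤ 𝒜 (g + k) := by
            rw [addSubgroup_mul_le]
            intro a ha b hb
            have ha0 : a ∈ 𝒜 0 := (h.1 g).1 ha
            simpa using SetLike.mul_mem_graded ha0 hb
    · intro x hx
      rw [(h.2 g k).1]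
      have h1 : (1 : S) ∈ 𝒜 g * 𝒜 (-g) := he g ▸ hmem g
      simpa using addSubgroup_mul_mem_mul h1 hx
end

section
/- Let A be a commutative unital ring and B a unital commutative ring which is a proper ideal of A with identity 1_B ∈ A. Let S be the ring of 3×3 matrices with entries a_{ij} where a_{13}, a_{23}, a_{31}, a_{32} ∈ B and all other entries in A, graded by Z_2 with S_0 the subring of matrices supported on positions {(1,1),(1,2),(2,1),(2,2),(3,3)} and S_1 the set of matrices supported on positions {(1,3),(2,3),(3,1),(3,2)} with entries in B. Then S is epsilon-strongly Z_2-graded with ε_0 = 1_A·I and ε_1 = 1_B·I, S is not strongly graded (since 1_A ∉ B), and the extension S/S_0 is separable. -/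
open Pointwise

universe u

section Helpers

variable {R : Type*} [NonUnitalNonAssocRing R]

theorem DadeAux.mul_le {M N P : AddSubgroup R} (h : ∀ m ∈ M, ∀ n ∈ N, m * n ∈ P) :
    M * N ≤ P :=
  fun _x hx => AddSubmonoid.mul_induction_on hx h (fun _ _ ha hb => P.add_mem ha hb)

theorem DadeAux.mul_mem_mul {M N : AddSubgroup R} {m n : R} (hm : m ∈ M) (hn : n ∈ N) :
    m * n ∈ M * N :=
  AddSubmonoid.mul_mem_mul hm hn

theorem DadeAux.mul_induction {M N : AddSubgroup R} {x : R} (hx : x ∈ M * N)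
    {p : R → Prop} (hmul : ∀ m ∈ M, ∀ n ∈ N, p (m * n)) (hadd : ∀ a b, p a → p b → p (a + b)) :
    p x :=
  AddSubmonoid.mul_induction_on hx hmul hadd

end Helpers

set_option maxHeartbeats 1000000 in
/-- Dade-like example: let `A` be a commutative unital ring and `B ⊊ A` a unital ideal with
identity `e = 1_B`.  Inside the matrix ring `M₃(A)`, let `Stot` be the set of matrices whose
`(1,3), (2,3), (3,1), (3,2)` entries lie in `B`, graded by `ℤ₂` with `S0` the matrices
supported on `{(1,1),(1,2),(2,1),(2,2),(3,3)}` and `S1` the matrices supported on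
`{(1,3),(2,3),(3,1),(3,2)}` with entries in `B`.  Then this is an epsilon-strong
`ℤ₂`-grading with `ε₀ = 1` and `ε₁ = e • 1`, it is not strong, and `Stot` is separable over
`S0`. -/
theorem dade_like_example {A : Type*} [CommRing A] (B : Ideal A) (e : A)
    (heB : e ∈ B) (hBid : ∀ b ∈ B, e * b = b) (hBne : B ≠ ⊤)
    (S0 S1 Stot : AddSubgroup (Matrix (Fin 3) (Fin 3) A))
    (hS0 : ∀ M : Matrix (Fin 3) (Fin 3) A,
      M ∈ S0 ↔ (M 0 2 = 0 ∧ M 1 2 = 0 ∧ M 2 0 = 0 ∧ M 2 1 = 0))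
    (hS1 : ∀ M : Matrix (Fin 3) (Fin 3) A,
      M ∈ S1 ↔ (M 0 0 = 0 ∧ M 0 1 = 0 ∧ M 1 0 = 0 ∧ M 1 1 = 0 ∧ M 2 2 = 0 ∧
        M 0 2 ∈ B ∧ M 1 2 ∈ B ∧ M 2 0 ∈ B ∧ M 2 1 ∈ B))
    (hStot : ∀ M : Matrix (Fin 3) (Fin 3) A,
      M ∈ Stot ↔ (M 0 2 ∈ B ∧ M 1 2 ∈ B ∧ M 2 0 ∈ B ∧ M 2 1 ∈ B)) :
    -- `Stot = S0 ⊕ S1` is a `ℤ₂`-grading of the ring `Stot`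
    (S0 ⊓ S1 = ⊥) ∧ (S0 ⊔ S1 = Stot) ∧
    ((1 : Matrix (Fin 3) (Fin 3) A) ∈ S0) ∧
    (S0 * S0 ≤ S0) ∧ (S0 * S1 ≤ S1) ∧ (S1 * S0 ≤ S1) ∧ (S1 * S1 ≤ S0) ∧
    -- the grading is epsilon-strong, with `ε₀ = 1` and `ε₁ = e • 1`
    ((1 : Matrix (Fin 3) (Fin 3) A) ∈ S0 * S0) ∧
    (e • (1 : Matrix (Fin 3) (Fin 3) A) ∈ S1 * S1) ∧
    (∀ s ∈ S1, (e • (1 : Matrix (Fin 3) (Fin 3) A)) * s = s ∧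
      s * (e • (1 : Matrix (Fin 3) (Fin 3) A)) = s) ∧
    -- the grading is not strong
    (S1 * S1 ≠ S0) ∧
    -- the extension `Stot / S0` is separable
    (∃ (n : ℕ) (a b : Fin n → Matrix (Fin 3) (Fin 3) A),
      (∀ i, a i ∈ Stot ∧ b i ∈ Stot) ∧ (∑ i, a i * b i) = 1 ∧
      ∀ (M : Type u) [AddCommGroup M] (φ : Matrix (Fin 3) (Fin 3) A → Matrix (Fin 3) (Fin 3) A → M),
        (∀ x ∈ Stot, ∀ x' ∈ Stot, ∀ y ∈ Stot, φ (x + x') y = φ x y + φ x' y) →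
        (∀ x ∈ Stot, ∀ y ∈ Stot, ∀ y' ∈ Stot, φ x (y + y') = φ x y + φ x y') →
        (∀ r ∈ S0, ∀ x ∈ Stot, ∀ y ∈ Stot, φ (x * r) y = φ x (r * y)) →
        ∀ s ∈ Stot, (∑ i, φ (s * a i) (b i)) = ∑ i, φ (a i) (b i * s)) := by
  have he : e * e = e := hBid e heB
  have hBmul : ∀ x : A, e * x ∈ B := fun x => B.mul_mem_right x heB
  -- `1 ∈ S0`
  have h1S0 : (1 : Matrix (Fin 3) (Fin 3) A) ∈ S0 := by
    rw [hS0]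
    refine ⟨?_, ?_, ?_, ?_⟩ <;> simp [Matrix.one_apply]
  -- membership of standard basis matrices with entry in `B`
  have hEB : ∀ (i j : Fin 3) (c : A), c ∈ B → Matrix.single i j c ∈ Stot := by
    intro i j c hc
    rw [hStot]
    refine ⟨?_, ?_, ?_, ?_⟩ <;>
      · simp only [Matrix.single, Matrix.of_apply]
        split
        · exact hc
        · exact B.zero_mem
  have hS0sub : S0 ≤ Stot := by
    intro X hX
    rw [hS0] at hX
    rw [hStot]
    exact ⟨hX.1 ▸ B.zero_mem, hX.2.1 ▸ B.zero_mem, hX.2.2.1 ▸ B.zero_mem, hX.2.2.2 ▸ B.zero_mem⟩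
  have hS1sub : S1 ≤ Stot := by
    intro X hX
    rw [hS1] at hX
    rw [hStot]
    exact ⟨hX.2.2.2.2.2.1, hX.2.2.2.2.2.2.1, hX.2.2.2.2.2.2.2.1, hX.2.2.2.2.2.2.2.2⟩
  have h1tot : (1 : Matrix (Fin 3) (Fin 3) A) ∈ Stot := hS0sub h1S0
  refine ⟨?_, ?_, h1S0, ?_, ?_, ?_, ?_, ?_, ?_, ?_, ?_, ?_⟩
  · -- S0 ⊓ S1 = ⊥
    rw [eq_bot_iff]
    intro X hX
    have h0 := (hS0 X).1 hX.1
    have h1 := (hS1 X).1 hX.2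
    rw [AddSubgroup.mem_bot]
    ext u v
    fin_cases u <;> fin_cases v <;> simp_all
  · -- S0 ⊔ S1 = Stot
    apply le_antisymm (sup_le hS0sub hS1sub)
    intro X hX
    rw [hStot] at hX
    obtain ⟨h02, h12, h20, h21⟩ := hX
    set N1 : Matrix (Fin 3) (Fin 3) A :=
      Matrix.single 0 2 (X 0 2) + Matrix.single 1 2 (X 1 2) +
        Matrix.single 2 0 (X 2 0) + Matrix.single 2 1 (X 2 1) with hN1
    have hN1S1 : N1 ∈ S1 := by
      rw [hS1]
      refine ⟨?_, ?_, ?_, ?_, ?_, ?_, ?_, ?_, ?_⟩ <;>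
        simp [hN1, Matrix.add_apply, Matrix.single, Matrix.of_apply, h02, h12, h20, h21]
    have hN0S0 : X - N1 ∈ S0 := by
      rw [hS0]
      refine ⟨?_, ?_, ?_, ?_⟩ <;>
        simp [hN1, Matrix.sub_apply, Matrix.add_apply, Matrix.single, Matrix.of_apply]
    have : X = (X - N1) + N1 := by abel
    rw [this]
    exact AddSubgroup.add_mem _ (AddSubgroup.mem_sup_left hN0S0) (AddSubgroup.mem_sup_right hN1S1)
  · -- S0 * S0 ≤ S0
    refine DadeAux.mul_le ?_
    intro X hX Y hY
    rw [hS0] at hX hY ⊢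
    obtain ⟨x02, x12, x20, x21⟩ := hX
    obtain ⟨y02, y12, y20, y21⟩ := hY
    refine ⟨?_, ?_, ?_, ?_⟩ <;>
      simp [Matrix.mul_apply, Fin.sum_univ_three, x02, x12, x20, x21, y02, y12, y20, y21]
  · -- S0 * S1 ≤ S1
    refine DadeAux.mul_le ?_
    intro X hX Y hY
    rw [hS0] at hX
    rw [hS1] at hY ⊢
    obtain ⟨x02, x12, x20, x21⟩ := hX
    obtain ⟨y00, y01, y10, y11, y22, yb02, yb12, yb20, yb21⟩ := hY
    refine ⟨?_, ?_, ?_, ?_, ?_, ?_, ?_, ?_, ?_⟩ <;>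
      simp only [Matrix.mul_apply, Fin.sum_univ_three, x02, x12, x20, x21, y00, y01, y10, y11,
        y22, zero_mul, mul_zero, add_zero, zero_add]
    · exact B.add_mem (B.mul_mem_left _ yb02) (B.mul_mem_left _ yb12)
    · exact B.add_mem (B.mul_mem_left _ yb02) (B.mul_mem_left _ yb12)
    · exact B.mul_mem_left _ yb20
    · exact B.mul_mem_left _ yb21
  · -- S1 * S0 ≤ S1
    refine DadeAux.mul_le ?_
    intro X hX Y hY
    rw [hS1] at hX ⊢
    rw [hS0] at hY
    obtain ⟨x00, x01, x10, x11, x22, xb02, xb12, xb20, xb21⟩ := hX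
    obtain ⟨y02, y12, y20, y21⟩ := hY
    refine ⟨?_, ?_, ?_, ?_, ?_, ?_, ?_, ?_, ?_⟩ <;>
      simp only [Matrix.mul_apply, Fin.sum_univ_three, x00, x01, x10, x11, x22, y02, y12, y20,
        y21, zero_mul, mul_zero, add_zero, zero_add]
    · exact B.mul_mem_right _ xb02
    · exact B.mul_mem_right _ xb12
    · exact B.add_mem (B.mul_mem_right _ xb20) (B.mul_mem_right _ xb21)
    · exact B.add_mem (B.mul_mem_right _ xb20) (B.mul_mem_right _ xb21)
  · -- S1 * S1 ≤ S0
    refine DadeAux.mul_le ?_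
    intro X hX Y hY
    rw [hS1] at hX hY
    rw [hS0]
    obtain ⟨x00, x01, x10, x11, x22, xb02, xb12, xb20, xb21⟩ := hX
    obtain ⟨y00, y01, y10, y11, y22, yb02, yb12, yb20, yb21⟩ := hY
    refine ⟨?_, ?_, ?_, ?_⟩ <;>
      simp [Matrix.mul_apply, Fin.sum_univ_three, x00, x01, x10, x11, x22, y00, y01, y10, y11, y22]
  · -- 1 ∈ S0 * S0
    have : (1 : Matrix (Fin 3) (Fin 3) A) = 1 * 1 := (one_mul 1).symm
    rw [this]
    exact DadeAux.mul_mem_mul h1S0 h1S0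
  · -- e • 1 ∈ S1 * S1
    have hES1 : ∀ i j : Fin 3, (i = 0 ∧ j = 2) ∨ (i = 1 ∧ j = 2) ∨ (i = 2 ∧ j = 0) ∨
        (i = 2 ∧ j = 1) → Matrix.single i j e ∈ S1 := by
      intro i j hij
      rw [hS1]
      rcases hij with ⟨rfl, rfl⟩ | ⟨rfl, rfl⟩ | ⟨rfl, rfl⟩ | ⟨rfl, rfl⟩ <;>
        refine ⟨?_, ?_, ?_, ?_, ?_, ?_, ?_, ?_, ?_⟩ <;>
          first
            | (simp only [Matrix.single, Matrix.of_apply]; split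
               · exact heB
               · exact B.zero_mem)
            | simp [Matrix.single]
    have hdecomp : e • (1 : Matrix (Fin 3) (Fin 3) A) =
        Matrix.single 0 2 e * Matrix.single 2 0 e +
        Matrix.single 1 2 e * Matrix.single 2 1 e +
        Matrix.single 2 0 e * Matrix.single 0 2 e := by
      simp only [Matrix.single_mul_single_same, he]
      ext u v
      fin_cases u <;> fin_cases v <;>
        simp [Matrix.one_apply, Matrix.add_apply, Matrix.single, Matrix.of_apply]
    rw [hdecomp]
    refine AddSubgroup.add_mem _ (AddSubgroup.add_mem _ ?_ ?_) ?_ <;>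
      exact DadeAux.mul_mem_mul (hES1 _ _ (by simp)) (hES1 _ _ (by simp))
  · -- ε₁ acts as identity on S1
    intro s hs
    rw [hS1] at hs
    obtain ⟨h00, h01, h10, h11, h22, hb02, hb12, hb20, hb21⟩ := hs
    have hall : ∀ u v : Fin 3, s u v ∈ B := by
      intro u v
      fin_cases u <;> fin_cases v <;> simp [h00, h01, h10, h11, h22, hb02, hb12, hb20, hb21]
    constructor
    · ext u v
      rw [Matrix.smul_mul, one_mul, Matrix.smul_apply, smul_eq_mul]
      exact hBid _ (hall u v)
    · ext u v
      rw [Matrix.mul_smul, mul_one, Matrix.smul_apply, smul_eq_mul]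
      exact hBid _ (hall u v)
  · -- not strongly graded
    intro hEq
    have hkey : ∀ X ∈ S1 * S1, X 2 2 ∈ B := by
      intro X hX
      refine DadeAux.mul_induction (p := fun Y => Y 2 2 ∈ B) hX ?_ ?_
      · intro m hm n hn
        rw [hS1] at hm hn
        obtain ⟨m00, m01, m10, m11, m22, mb02, mb12, mb20, mb21⟩ := hm
        simp only [Matrix.mul_apply, Fin.sum_univ_three, m22, zero_mul, add_zero]
        exact B.add_mem (B.mul_mem_right _ mb20) (B.mul_mem_right _ mb21)
      · intro a b ha hb
        rw [Matrix.add_apply]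
        exact B.add_mem ha hb
    have h1B : (1 : A) ∈ B := by
      have := hkey 1 (hEq ▸ h1S0)
      simpa [Matrix.one_apply] using this
    exact hBne (B.eq_top_iff_one.mpr h1B)
  · -- separability
    refine ⟨4,
      ![Matrix.single 0 0 e, Matrix.single 1 0 e, Matrix.single 2 0 e,
        1 - e • 1],
      ![Matrix.single 0 0 e, Matrix.single 0 1 e, Matrix.single 0 2 e,
        1], ?_, ?_, ?_⟩
    · intro i
      have hcS0 : (1 - e • (1 : Matrix (Fin 3) (Fin 3) A)) ∈ S0 := by
        rw [hS0]
        refine ⟨?_, ?_, ?_, ?_⟩ <;>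
          simp [Matrix.sub_apply, Matrix.smul_apply, Matrix.one_apply]
      fin_cases i <;>
        exact ⟨by first | exact hEB _ _ e heB | exact hS0sub hcS0,
               by first | exact hEB _ _ e heB | exact h1tot⟩
    · have Hid : Matrix.single 0 0 e + Matrix.single 1 1 e +
          Matrix.single 2 2 e = e • (1 : Matrix (Fin 3) (Fin 3) A) := by
        ext u v
        fin_cases u <;> fin_cases v <;>
          simp [Matrix.add_apply, Matrix.smul_apply, Matrix.one_apply,
            Matrix.single, Matrix.of_apply]
      rw [Fin.sum_univ_four]
      simp only [Matrix.cons_val_zero, Matrix.cons_val_one, Matrix.head_cons,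
        Matrix.cons_val_two, Matrix.tail_cons, Matrix.cons_val_three,
        Matrix.single_mul_single_same, he, mul_one]
      rw [← Hid]
      abel
    · intro M _ φ hadd1 hadd2 hbal s hs
      obtain ⟨hs02, hs12, hs20, hs21⟩ := (hStot s).1 hs
      have hcS0 : (1 - e • (1 : Matrix (Fin 3) (Fin 3) A)) ∈ S0 := by
        rw [hS0]
        refine ⟨?_, ?_, ?_, ?_⟩ <;>
          simp [Matrix.sub_apply, Matrix.smul_apply, Matrix.one_apply]
      set c : Matrix (Fin 3) (Fin 3) A := 1 - e • (1 : Matrix (Fin 3) (Fin 3) A) with hc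
      have hctot : c ∈ Stot := hS0sub hcS0
      -- the diagonal-complement part
      have hcs_eq : c * s = s - e • s := by rw [hc, sub_mul, one_mul, Matrix.smul_mul, one_mul]
      have hsc_eq : s * c = s - e • s := by rw [hc, mul_sub, mul_one, Matrix.mul_smul, mul_one]
      have hcsS0 : c * s ∈ S0 := by
        rw [hcs_eq, hS0]
        refine ⟨?_, ?_, ?_, ?_⟩ <;>
          simp only [Matrix.sub_apply, Matrix.smul_apply, smul_eq_mul] <;>
          rw [hBid _ (by assumption), sub_self]
      have hcterm : φ (s * c) 1 = φ c (1 * s) := by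
        rw [one_mul]
        have e1 : φ (s * c) 1 = φ s c := by
          have := hbal c hcS0 s hs 1 h1tot
          rwa [mul_one] at this
        have e2 : φ c s = φ 1 (c * s) := by
          have := hbal c hcS0 1 h1tot s hs
          rwa [one_mul] at this
        have e3 : φ 1 (c * s) = φ (c * s) 1 := by
          have := hbal (c * s) hcsS0 1 h1tot 1 h1tot
          rw [one_mul, mul_one] at this
          exact this.symm
        have e4 : φ (c * s) 1 = φ s c := by
          rw [hcs_eq, ← hsc_eq]
          have := hbal c hcS0 s hs 1 h1tot
          rwa [mul_one] at this
        rw [e1, e2, e3, e4]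
      -- the matrix-unit parts
      have hsplitA : ∀ i : Fin 3, s * (Matrix.single i 0 e : Matrix (Fin 3) (Fin 3) A) =
          Matrix.single 0 0 (e * s 0 i) + Matrix.single 1 0 (e * s 1 i) +
            Matrix.single 2 0 (e * s 2 i) := by
        intro i
        ext u v
        fin_cases i <;> fin_cases u <;> fin_cases v <;>
          simp [Matrix.mul_apply, Fin.sum_univ_three, Matrix.add_apply, Matrix.single,
            Matrix.of_apply, mul_comm]
      have hsplitB : ∀ i : Fin 3, (Matrix.single 0 i e : Matrix (Fin 3) (Fin 3) A) * s =
          Matrix.single 0 0 (e * s i 0) + Matrix.single 0 1 (e * s i 1) +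
            Matrix.single 0 2 (e * s i 2) := by
        intro i
        ext u v
        fin_cases i <;> fin_cases u <;> fin_cases v <;>
          simp [Matrix.mul_apply, Fin.sum_univ_three, Matrix.add_apply, Matrix.single,
            Matrix.of_apply]
      have hr0 : ∀ j i : Fin 3, (Matrix.single 0 0 (e * s j i) : Matrix (Fin 3) (Fin 3) A) ∈ S0 := by
        intro j i
        rw [hS0]
        refine ⟨?_, ?_, ?_, ?_⟩ <;> simp [Matrix.single, Matrix.of_apply]
      have hfac : ∀ j i : Fin 3, (Matrix.single j 0 (e * s j i) : Matrix (Fin 3) (Fin 3) A) =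
          Matrix.single j 0 e * Matrix.single 0 0 (e * s j i) := by
        intro j i
        rw [Matrix.single_mul_single_same, ← mul_assoc, he]
      have hrmul : ∀ j i : Fin 3, (Matrix.single 0 0 (e * s j i) : Matrix (Fin 3) (Fin 3) A) *
          Matrix.single 0 i e = Matrix.single 0 i (e * s j i) := by
        intro j i
        rw [Matrix.single_mul_single_same, mul_comm (e * s j i) e, ← mul_assoc, he]
      have hA : ∀ i : Fin 3, φ (s * Matrix.single i 0 e) (Matrix.single 0 i e) =
          φ (Matrix.single 0 0 e) (Matrix.single 0 i (e * s 0 i)) +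
          φ (Matrix.single 1 0 e) (Matrix.single 0 i (e * s 1 i)) +
          φ (Matrix.single 2 0 e) (Matrix.single 0 i (e * s 2 i)) := by
        intro i
        rw [hsplitA i]
        have m0 := hEB 0 0 _ (hBmul (s 0 i))
        have m1 := hEB 1 0 _ (hBmul (s 1 i))
        have m2 := hEB 2 0 _ (hBmul (s 2 i))
        rw [hadd1 _ (Stot.add_mem m0 m1) _ m2 _ (hEB 0 i e heB),
          hadd1 _ m0 _ m1 _ (hEB 0 i e heB)]
        congr 1
        · congr 1
          · rw [hfac 0 i, hbal _ (hr0 0 i) _ (hEB 0 0 e heB) _ (hEB 0 i e heB), hrmul 0 i]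
          · rw [hfac 1 i, hbal _ (hr0 1 i) _ (hEB 1 0 e heB) _ (hEB 0 i e heB), hrmul 1 i]
        · rw [hfac 2 i, hbal _ (hr0 2 i) _ (hEB 2 0 e heB) _ (hEB 0 i e heB), hrmul 2 i]
      have hB2 : ∀ i : Fin 3, φ (Matrix.single i 0 e) (Matrix.single 0 i e * s) =
          φ (Matrix.single i 0 e) (Matrix.single 0 0 (e * s i 0)) +
          φ (Matrix.single i 0 e) (Matrix.single 0 1 (e * s i 1)) +
          φ (Matrix.single i 0 e) (Matrix.single 0 2 (e * s i 2)) := by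
        intro i
        rw [hsplitB i]
        have m0 := hEB 0 0 _ (hBmul (s i 0))
        have m1 := hEB 0 1 _ (hBmul (s i 1))
        have m2 := hEB 0 2 _ (hBmul (s i 2))
        rw [hadd2 _ (hEB i 0 e heB) _ (Stot.add_mem m0 m1) _ m2,
          hadd2 _ (hEB i 0 e heB) _ m0 _ m1]
      rw [Fin.sum_univ_four, Fin.sum_univ_four]
      simp only [Matrix.cons_val_zero, Matrix.cons_val_one, Matrix.head_cons,
        Matrix.cons_val_two, Matrix.tail_cons, Matrix.cons_val_three]
      rw [hA 0, hA 1, hA 2, hB2 0, hB2 1, hB2 2, hcterm]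
      abel
end
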